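/- Let G be a finite simple graph on a nonempty vertex set V. Then there exist d ≥ 1, Hermitian d×d complex matrices (O_α)_{α∈V} with O_α² = I for all α, satisfying O_α O_β = −O_β O_α whenever αβ is an edge of G and O_α O_β = O_β O_α whenever α ≠ β are not adjacent in G, and a real vector J ∈ ℝ^V with Σ_α J_α² = 1, such that ‖Σ_α J_α O_α‖² ≥ α(G), where α(G) is the independence number of G. (In particular the graph invariant Ψ(G) is bounded below by α(G).) -/

import Mathlib

open scoped BigOperators

/-- The independence number of `G`: the largest cardinality of a set of vertices no two of
which are adjacent. -/
noncomputable def indepNum {V : Type*} [Fintype V] (G : SimpleGraph V) : ℕ :=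
  sSup {k : ℕ | ∃ s : Finset V, (∀ a ∈ s, ∀ b ∈ s, ¬ G.Adj a b) ∧ s.card = k}

/-- The operator norm of a complex matrix acting on ℂ^d with the standard Hermitian
inner product. -/
noncomputable def matOpNorm {m : Type*} [Fintype m] [DecidableEq m] (M : Matrix m m ℂ) : ℝ :=
  ‖Matrix.toEuclideanCLM (𝕜 := ℂ) M‖

section Stmt8Aux

open Matrix

/-- Pauli X on a single qubit indexed by `Bool`. -/
def pX : Matrix Bool Bool ℂ := Matrix.of fun s t => if s = t then 0 else 1

/-- Pauli Z on a single qubit indexed by `Bool`. -/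
def pZ : Matrix Bool Bool ℂ := Matrix.of fun s t => if s = t then (if s then -1 else 1) else 0

lemma pX_mul_pX : pX * pX = 1 := by
  ext s t; cases s <;> cases t <;>
    simp [pX, Matrix.mul_apply, Fintype.sum_bool, Matrix.one_apply]

lemma pZ_mul_pZ : pZ * pZ = 1 := by
  ext s t; cases s <;> cases t <;>
    simp [pZ, Matrix.mul_apply, Fintype.sum_bool, Matrix.one_apply]

lemma pX_mul_pZ : pX * pZ = -(pZ * pX) := by
  ext s t; cases s <;> cases t <;>
    simp [pX, pZ, Matrix.mul_apply, Fintype.sum_bool]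

lemma pX_herm : pX.IsHermitian := by
  ext s t; cases s <;> cases t <;> simp [pX, Matrix.conjTranspose_apply]

lemma pZ_herm : pZ.IsHermitian := by
  ext s t; cases s <;> cases t <;> simp [pZ, Matrix.conjTranspose_apply]

lemma pX_mulVec_ones : pX.mulVec (fun _ => (1 : ℂ)) = fun _ => 1 := by
  funext s; cases s <;> simp [pX, Matrix.mulVec, dotProduct, Fintype.sum_bool]

lemma pZ_mulVec_e : pZ.mulVec (fun b => if b then 0 else (1 : ℂ)) =
    fun b => if b then 0 else 1 := by
  funext s; cases s <;> simp [pZ, Matrix.mulVec, dotProduct, Fintype.sum_bool]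

variable {Q : Type*} [Fintype Q] [DecidableEq Q]

/-- Tensor product of one-qubit matrices, as a matrix on `Q → Bool`. -/
noncomputable def tens (P : Q → Matrix Bool Bool ℂ) : Matrix (Q → Bool) (Q → Bool) ℂ :=
  Matrix.of fun s t => ∏ q, P q (s q) (t q)

lemma tens_apply (P : Q → Matrix Bool Bool ℂ) (s t : Q → Bool) :
    tens P s t = ∏ q, P q (s q) (t q) := rfl

lemma tens_mul (P R : Q → Matrix Bool Bool ℂ) :
    tens P * tens R = tens fun q => P q * R q := by
  ext s t
  simp only [Matrix.mul_apply, tens_apply]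
  rw [Fintype.prod_sum (fun q (b : Bool) => P q (s q) b * R q b (t q))]
  exact Finset.sum_congr rfl fun x _ => Finset.prod_mul_distrib.symm

lemma tens_one : tens (fun _ : Q => (1 : Matrix Bool Bool ℂ)) = 1 := by
  ext s t
  simp only [tens_apply, Matrix.one_apply, Fintype.prod_boole]
  simp [funext_iff]

lemma tens_conjTranspose (P : Q → Matrix Bool Bool ℂ) :
    (tens P)ᴴ = tens fun q => (P q)ᴴ := by
  ext s t
  simp [tens_apply, Matrix.conjTranspose_apply, map_prod]

lemma tens_congr {P R : Q → Matrix Bool Bool ℂ} (h : ∀ q, P q = R q) : tens P = tens R := by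
  have : P = R := funext h
  rw [this]

lemma tens_neg_single {P R : Q → Matrix Bool Bool ℂ} (q0 : Q) (h0 : P q0 = -(R q0))
    (h : ∀ q, q ≠ q0 → P q = R q) : tens P = -(tens R) := by
  ext s t
  simp only [tens_apply, Matrix.neg_apply]
  rw [← Finset.mul_prod_erase Finset.univ _ (Finset.mem_univ q0),
      ← Finset.mul_prod_erase Finset.univ (fun q => R q (s q) (t q)) (Finset.mem_univ q0)]
  have h1 : P q0 (s q0) (t q0) = -(R q0 (s q0) (t q0)) := by rw [h0]; simp
  rw [h1, Finset.prod_congr rfl (fun q hq => by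
    rw [h q (Finset.ne_of_mem_erase hq)])]
  ring

lemma tens_mulVec (P : Q → Matrix Bool Bool ℂ) (v : Q → Bool → ℂ) :
    (tens P).mulVec (fun t => ∏ q, v q (t q)) = fun s => ∏ q, (P q).mulVec (v q) (s q) := by
  funext s
  simp only [Matrix.mulVec, dotProduct, tens_apply]
  rw [Fintype.prod_sum (fun q (b : Bool) => P q (s q) b * v q b)]
  exact Finset.sum_congr rfl fun x _ => Finset.prod_mul_distrib.symm

lemma sum_mulVec' {ι n m : Type*} [Fintype n] (t : Finset ι) (M : ι → Matrix m n ℂ)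
    (w : n → ℂ) : (∑ a ∈ t, M a).mulVec w = ∑ a ∈ t, (M a).mulVec w := by
  funext s
  simp only [Matrix.mulVec, dotProduct, Finset.sum_apply, Matrix.sum_apply,
    Finset.sum_mul]
  exact Finset.sum_comm

end Stmt8Aux

open Matrix

theorem stmt8 {V : Type*} [Fintype V] [Nonempty V] (G : SimpleGraph V) :
    ∃ (d : ℕ), 1 ≤ d ∧ ∃ (O : V → Matrix (Fin d) (Fin d) ℂ) (J : V → ℝ),
      (∀ a, (O a).IsHermitian) ∧
      (∀ a, O a * O a = 1) ∧
      (∀ a b, G.Adj a b → O a * O b = -(O b * O a)) ∧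
      (∀ a b, a ≠ b → ¬ G.Adj a b → O a * O b = O b * O a) ∧
      (∑ a, J a ^ 2 = 1) ∧
      (indepNum G : ℝ) ≤ matOpNorm (∑ a, (J a : ℂ) • O a) ^ 2 := by
  classical
  -- Get a maximum independent set S
  set T : Set ℕ := {k : ℕ | ∃ s : Finset V, (∀ a ∈ s, ∀ b ∈ s, ¬ G.Adj a b) ∧ s.card = k} with hT
  have hT1 : (1 : ℕ) ∈ T := by
    refine ⟨{Classical.arbitrary V}, ?_, Finset.card_singleton _⟩
    intro a ha b hb
    simp only [Finset.mem_singleton] at ha hb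
    subst ha; subst hb; exact G.irrefl
  have hTbdd : BddAbove T := by
    refine ⟨Fintype.card V, fun k hk => ?_⟩
    obtain ⟨s, _, rfl⟩ := hk
    exact Finset.card_le_univ s
  have hmem : indepNum G ∈ T := Nat.sSup_mem ⟨1, hT1⟩ hTbdd
  obtain ⟨S, hSind, hScard⟩ := hmem
  set k : ℕ := indepNum G with hk
  have hk1 : 1 ≤ k := le_csSup hTbdd hT1
  have hkpos : (0 : ℝ) < k := by exact_mod_cast hk1
  -- ordering of vertices
  let e0 : V ≃ Fin (Fintype.card V) := Fintype.equivFin V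
  -- qubit structure
  set Q := V × V with hQ
  let cond : Q → Prop := fun q => G.Adj q.1 q.2 ∧ e0 q.1 < e0 q.2
  let Pa : V → Q → Matrix Bool Bool ℂ := fun a q =>
    if cond q then (if a = q.1 then pX else if a = q.2 then pZ else 1) else 1
  let O' : V → Matrix (Q → Bool) (Q → Bool) ℂ := fun a => tens (Pa a)
  -- dimension
  set d : ℕ := 2 ^ Fintype.card Q with hd
  have hcard : Fintype.card (Q → Bool) = d := by
    simp [hd, Fintype.card_fun]
  let eq2 : (Q → Bool) ≃ Fin d := Fintype.equivFinOfCardEq hcard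
  let φ := Matrix.reindexAlgEquiv ℂ eq2 (A := ℂ)
  refine ⟨d, Nat.one_le_two_pow, fun a => φ (O' a),
    fun a => if a ∈ S then (Real.sqrt k)⁻¹ else 0, ?_, ?_, ?_, ?_, ?_, ?_⟩
  · -- Hermitian
    intro a
    have h' : (O' a).IsHermitian := by
      show (O' a)ᴴ = O' a
      rw [tens_conjTranspose]
      refine tens_congr fun q => ?_
      simp only [Pa]
      split_ifs <;> first | exact pX_herm | exact pZ_herm | exact Matrix.conjTranspose_one
    show ((O' a).submatrix ⇑eq2.symm ⇑eq2.symm)ᴴ = (O' a).submatrix ⇑eq2.symm ⇑eq2.symm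
    rw [Matrix.conjTranspose_submatrix, h']
  · -- squares
    intro a
    have h' : O' a * O' a = 1 := by
      show tens (Pa a) * tens (Pa a) = 1
      rw [tens_mul, ← tens_one]
      refine tens_congr fun q => ?_
      simp only [Pa]
      split_ifs <;> simp [pX_mul_pX, pZ_mul_pZ]
    rw [← _root_.map_mul, h', _root_.map_one]
  · -- anticommutation
    intro a b hab
    have key : ∀ x y : V, G.Adj x y → e0 x < e0 y → O' x * O' y = -(O' y * O' x) := by
      intro x y hxy hlt
      have hxyne : x ≠ y := G.ne_of_adj hxy
      show tens (Pa x) * tens (Pa y) = -(tens (Pa y) * tens (Pa x))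
      rw [tens_mul, tens_mul]
      refine tens_neg_single ((x, y) : Q) ?_ ?_
      · have hc : cond ((x, y) : Q) := ⟨hxy, hlt⟩
        simp only [Pa, if_pos hc]
        simp only [if_pos rfl, if_neg hxyne.symm, if_pos rfl]
        exact pX_mul_pZ
      · intro q hq
        have : Pa x q * Pa y q = Pa y q * Pa x q := by
          simp only [Pa]
          by_cases hc : cond q
          · rw [if_pos hc, if_pos hc]
            rcases hc with ⟨hadj, hlt'⟩
            by_cases hx1 : x = q.1
            · by_cases hy2 : y = q.2
              · exact absurd (Prod.ext hx1.symm hy2.symm) hq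
              · have hy1 : y ≠ q.1 := fun h => hxyne (hx1.trans h.symm)
                rw [if_pos hx1, if_neg hy1, if_neg hy2, mul_one, one_mul]
            · by_cases hx2 : x = q.2
              · by_cases hy1 : y = q.1
                · subst hx2; subst hy1
                  exact absurd hlt' (by omega)
                · have hy2 : y ≠ q.2 := fun h => hxyne (hx2.trans h.symm)
                  rw [if_neg hy1, if_neg hy2, mul_one, one_mul]
              · rw [if_neg hx1, if_neg hx2, mul_one, one_mul]
          · rw [if_neg hc, mul_one, one_mul]
        rw [this]
    have htri : e0 a < e0 b ∨ e0 b < e0 a := by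
      rcases lt_trichotomy (e0 a) (e0 b) with h | h | h
      · exact Or.inl h
      · exact absurd (e0.injective (by exact_mod_cast h)) (G.ne_of_adj hab)
      · exact Or.inr h
    have h' : O' a * O' b = -(O' b * O' a) := by
      rcases htri with h | h
      · exact key a b hab h
      · have := key b a hab.symm h
        rw [this, neg_neg]
    calc φ (O' a) * φ (O' b) = φ (O' a * O' b) := (_root_.map_mul φ _ _).symm
      _ = φ (-(O' b * O' a)) := by rw [h']
      _ = -(φ (O' b) * φ (O' a)) := by rw [_root_.map_neg, _root_.map_mul]
  · -- commutation
    intro a b hne hnadj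
    have h' : O' a * O' b = O' b * O' a := by
      show tens (Pa a) * tens (Pa b) = tens (Pa b) * tens (Pa a)
      rw [tens_mul, tens_mul]
      refine tens_congr fun q => ?_
      simp only [Pa]
      by_cases hc : cond q
      · rw [if_pos hc, if_pos hc]
        rcases hc with ⟨hadj, _⟩
        by_cases ha1 : a = q.1
        · by_cases hb2 : b = q.2
          · exact absurd (ha1 ▸ hb2 ▸ hadj) hnadj
          · have hb1 : b ≠ q.1 := fun h => hne (ha1.trans h.symm)
            rw [if_pos ha1, if_neg hb1, if_neg hb2, mul_one, one_mul]
        · by_cases ha2 : a = q.2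
          · by_cases hb1 : b = q.1
            · exact absurd (hb1 ▸ ha2 ▸ hadj) (fun h => hnadj h.symm)
            · have hb2 : b ≠ q.2 := fun h => hne (ha2.trans h.symm)
              rw [if_neg hb1, if_neg hb2, mul_one, one_mul]
          · rw [if_neg ha1, if_neg ha2, mul_one, one_mul]
      · rw [if_neg hc, mul_one, one_mul]
    rw [← _root_.map_mul, h', _root_.map_mul]
  · -- sum of squares of J
    have : ∀ a : V, (if a ∈ S then (Real.sqrt k)⁻¹ else 0) ^ 2 =
        if a ∈ S then ((Real.sqrt k)⁻¹) ^ 2 else 0 := by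
      intro a; split_ifs <;> simp
    simp only [this]
    rw [Finset.sum_ite_mem, Finset.univ_inter, Finset.sum_const, hScard]
    rw [inv_pow, Real.sq_sqrt hkpos.le]
    field_simp
    rw [nsmul_eq_mul]; field_simp [hkpos.ne']
  · -- the norm bound
    -- the eigenvector
    let v : Q → Bool → ℂ := fun q => if cond q ∧ q.1 ∈ S then (fun _ => 1)
      else (fun b => if b then 0 else 1)
    let w : (Q → Bool) → ℂ := fun t => ∏ q, v q (t q)
    have heig : ∀ a ∈ S, (O' a).mulVec w = w := by
      intro a ha
      show (tens (Pa a)).mulVec (fun t => ∏ q, v q (t q)) = fun t => ∏ q, v q (t q)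
      rw [tens_mulVec]
      funext s
      refine Finset.prod_congr rfl fun q _ => ?_
      have : (Pa a q).mulVec (v q) = v q := by
        simp only [Pa, v]
        by_cases hc : cond q
        · rw [if_pos hc]
          by_cases ha1 : a = q.1
          · have hq1 : q.1 ∈ S := ha1 ▸ ha
            rw [if_pos ha1, if_pos ⟨hc, hq1⟩]
            exact pX_mulVec_ones
          · by_cases ha2 : a = q.2
            · have hq2 : q.2 ∈ S := ha2 ▸ ha
              have hq1 : q.1 ∉ S := fun h => hSind q.1 h q.2 hq2 hc.1
              rw [if_neg ha1, if_pos ha2, if_neg (fun h => hq1 h.2)]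
              exact pZ_mulVec_e
            · rw [if_neg ha1, if_neg ha2]
              split_ifs <;> exact Matrix.one_mulVec _
        · rw [if_neg hc, if_neg (fun h => hc h.1)]
          exact Matrix.one_mulVec _
      rw [this]
    -- A' and its eigen-equation
    set A' : Matrix (Q → Bool) (Q → Bool) ℂ :=
      ∑ a, (((if a ∈ S then (Real.sqrt k)⁻¹ else 0 : ℝ)) : ℂ) • O' a with hA'
    have hAw : A'.mulVec w = (((Real.sqrt k : ℝ)) : ℂ) • w := by
      rw [hA', sum_mulVec']
      have : ∀ a : V, ((((if a ∈ S then (Real.sqrt k)⁻¹ else 0 : ℝ)) : ℂ) • O' a).mulVec w =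
          (if a ∈ S then (((Real.sqrt k)⁻¹ : ℝ) : ℂ) • w else 0) := by
        intro a
        rw [Matrix.smul_mulVec]
        by_cases ha : a ∈ S
        · rw [if_pos ha, if_pos ha, heig a ha]
        · rw [if_neg ha, if_neg ha]; push_cast; simp
      simp only [this]
      rw [Finset.sum_ite_mem, Finset.univ_inter, Finset.sum_const, hScard]
      rw [← Nat.cast_smul_eq_nsmul ℂ, smul_smul]
      congr 1
      have hmm : (Real.sqrt k) * (Real.sqrt k) = (k:ℝ) := Real.mul_self_sqrt hkpos.le
      have hs0 : ((Real.sqrt (k:ℝ)) : ℂ) ≠ 0 := by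
        rw [Complex.ofReal_ne_zero]
        exact ne_of_gt (Real.sqrt_pos.mpr hkpos)
      field_simp
      push_cast; rw [mul_one_div, div_eq_iff hs0]
      exact_mod_cast hmm.symm
    -- transport to Fin d
    have hsum : (∑ a, (((if a ∈ S then (Real.sqrt k)⁻¹ else 0 : ℝ)) : ℂ) • φ (O' a)) = φ A' := by
      rw [hA', _root_.map_sum]
      exact Finset.sum_congr rfl fun a _ => (_root_.map_smul φ _ _).symm
    rw [hsum]
    -- eigenvector on Fin d
    let x : EuclideanSpace ℂ (Fin d) := (WithLp.equiv 2 (Fin d → ℂ)).symm (w ∘ eq2.symm)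
    have hx : (Matrix.toEuclideanCLM (𝕜 := ℂ) (φ A')) x = (((Real.sqrt k : ℝ)) : ℂ) • x := by
      show (Matrix.toEuclideanCLM (𝕜 := ℂ) (φ A')) (WithLp.toLp 2 (w ∘ eq2.symm)) = _
      rw [Matrix.toEuclideanCLM_toLp]
      have : (φ A').mulVec (w ∘ eq2.symm) = (((Real.sqrt k : ℝ)) : ℂ) • (w ∘ eq2.symm) := by
        show ((Matrix.reindex eq2 eq2 A')).mulVec (w ∘ eq2.symm) = _
        rw [Matrix.reindex_apply, Matrix.submatrix_mulVec_equiv]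
        simp only [Equiv.symm_symm]
        have hcomp : (w ∘ ⇑eq2.symm) ∘ ⇑eq2 = w := by funext t; simp
        rw [hcomp, hAw]
        rfl
      rw [this]
      rfl
    have hwne : w (fun _ => false) = 1 := by
      show (∏ q, v q false) = 1
      refine Finset.prod_eq_one fun q _ => ?_
      simp only [v]
      split_ifs <;> simp
    have hxne : x ≠ 0 := by
      intro h
      have : w (fun _ => false) = 0 := by
        have := congrFun (congrArg (WithLp.equiv 2 (Fin d → ℂ)) h) (eq2 (fun _ => false))
        simpa [x] using this
      rw [hwne] at this
      exact one_ne_zero this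
    have hxnorm : 0 < ‖x‖ := norm_pos_iff.mpr hxne
    have hle : Real.sqrt k ≤ matOpNorm (φ A') := by
      have h1 : ‖(Matrix.toEuclideanCLM (𝕜 := ℂ) (φ A')) x‖ ≤ matOpNorm (φ A') * ‖x‖ :=
        (Matrix.toEuclideanCLM (𝕜 := ℂ) (φ A')).le_opNorm x
      rw [hx, norm_smul] at h1
      have h2 : ‖(((Real.sqrt k : ℝ)) : ℂ)‖ = Real.sqrt k := by
        rw [Complex.norm_real, Real.norm_eq_abs, abs_of_nonneg (Real.sqrt_nonneg _)]
      rw [h2] at h1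
      exact le_of_mul_le_mul_right h1 hxnorm
    have hnn : (0:ℝ) ≤ Real.sqrt k := Real.sqrt_nonneg _
    calc (k : ℝ) = Real.sqrt k * Real.sqrt k := (Real.mul_self_sqrt hkpos.le).symm
      _ ≤ matOpNorm (φ A') * matOpNorm (φ A') := mul_le_mul hle hle hnn (hnn.trans hle)
      _ = matOpNorm (φ A') ^ 2 := (sq _).symm
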